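/- Let (M,⊗,1,σ) be a symmetric monoidal category and let A be a cocommutative Hopf monoid in M. Then A is commutative, i.e. m_A∘σ_{A,A} = m_A, if and only if the adjoint morphism satisfies ad_A = ε_A⊗Id_A. As a consequence, if A is commutative then every monomorphism i:K→A in Hopf_coc(M) is normal. -/

import Mathlib

/-!
Common infrastructure for formalizing results on cocommutative Hopf monoids
in (abelian) symmetric monoidal categories.
-/

open CategoryTheory MonoidalCategory CategoryTheory.Limits

universe v u

namespace HopfSemiabelian

variable {C : Type u} [Category.{v} C] [MonoidalCategory.{v} C]

section HopfBasics
variable [BraidedCategory C]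

/-- The underlying object in `C` of a Hopf monoid. -/
abbrev hCar (H : Hopf C) : C := H.X
/-- The multiplication of a Hopf monoid. -/
abbrev hMul (H : Hopf C) : hCar H ⊗ hCar H ⟶ hCar H := MonObj.mul
/-- The unit of a Hopf monoid. -/
abbrev hOne (H : Hopf C) : 𝟙_ C ⟶ hCar H := MonObj.one
/-- The comultiplication of a Hopf monoid. -/
abbrev hComul (H : Hopf C) : hCar H ⟶ hCar H ⊗ hCar H := ComonObj.comul
/-- The counit of a Hopf monoid. -/
abbrev hCounit (H : Hopf C) : hCar H ⟶ 𝟙_ C := ComonObj.counit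
/-- The antipode of a Hopf monoid. -/
abbrev hS (H : Hopf C) : hCar H ⟶ hCar H := HopfObj.antipode

/-- The underlying comonoid in `C` of a Hopf monoid. -/
def hComon (H : Hopf C) : Comon C where
  X := hCar H
  comon :=
    { counit := hCounit H
      comul := hComul H
      counit_comul := ComonObj.counit_comul (hCar H)
      comul_counit := ComonObj.comul_counit (hCar H)
      comul_assoc := ComonObj.comul_assoc (hCar H) }

/-- The underlying monoid of a Hopf monoid. -/
abbrev hMon (H : Hopf C) : Mon C := { X := hCar H }

/-- A Hopf monoid is cocommutative if `σ ∘ Δ = Δ`. -/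
def IsCocomm (H : Hopf C) : Prop := hComul H ≫ (β_ (hCar H) (hCar H)).hom = hComul H

variable (C) in
/-- `Hopf_coc(M)`: the category of cocommutative Hopf monoids in `C`,
as a full subcategory of `Hopf_ C` (morphisms are bimonoid morphisms). -/
def HopfCoc := ObjectProperty.FullSubcategory (fun H : Hopf C => IsCocomm H)

instance : Category (HopfCoc C) := ObjectProperty.FullSubcategory.category _

/-- The underlying morphism in `C` of a morphism of cocommutative Hopf monoids. -/
def uhom {K A : HopfCoc C} (f : K ⟶ A) : hCar K.obj ⟶ hCar A.obj := f.hom.hom.hom.hom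

/-- The underlying morphism in `C` of a morphism of Hopf monoids. -/
def uhomH {K A : Hopf C} (f : K ⟶ A) : hCar K ⟶ hCar A := f.hom.hom.hom

/-- The zero morphism between two Hopf monoids (factoring through the trivial one). -/
def hzero (A B : Hopf C) : A ⟶ B :=
  ⟨(Bimon.toTrivial A.toBimon ≫ Bimon.trivialTo B.toBimon : A.toBimon ⟶ B.toBimon)⟩

/-- The zero morphism between two cocommutative Hopf monoids. -/
def zeroH (A B : HopfCoc C) : A ⟶ B := ⟨hzero A.obj B.obj⟩

end HopfBasics

section Adjoint
variable [BraidedCategory C]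

/-- The adjoint morphism `ad = m(m ⊗ S)(Id ⊗ σ)(Δ ⊗ Id) : A ⊗ A ⟶ A`. -/
def adOf {A : C} (m : A ⊗ A ⟶ A) (Δ : A ⟶ A ⊗ A) (S : A ⟶ A) : A ⊗ A ⟶ A :=
  (Δ ▷ A) ≫ (α_ A A A).hom ≫ (A ◁ (β_ A A).hom) ≫ (α_ A A A).inv ≫ (m ⊗ₘ S) ≫ m

/-- The right adjoint morphism `ad' = m(m ⊗ Id)(σ ⊗ Id)(Id ⊗ (S ⊗ Id)Δ) : A ⊗ A ⟶ A`. -/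
def adOf' {A : C} (m : A ⊗ A ⟶ A) (Δ : A ⟶ A ⊗ A) (S : A ⟶ A) : A ⊗ A ⟶ A :=
  (A ◁ (Δ ≫ (S ▷ A))) ≫ (α_ A A A).inv ≫ ((β_ A A).hom ▷ A) ≫ (m ▷ A) ≫ m

/-- The adjoint morphism `ad_H` of a Hopf monoid. -/
def hAd (H : Hopf C) : hCar H ⊗ hCar H ⟶ hCar H := adOf (hMul H) (hComul H) (hS H)

/-- The right adjoint morphism `ad'_H` of a Hopf monoid. -/
def hAd' (H : Hopf C) : hCar H ⊗ hCar H ⟶ hCar H := adOf' (hMul H) (hComul H) (hS H)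

/-- A monomorphism `i : K ⟶ A` in `Hopf_coc(M)` is (left) normal if there is
`ψ : A ⊗ K ⟶ K` with `i ∘ ψ = ad_A ∘ (Id_A ⊗ i)`. -/
def IsLeftNormal {K A : HopfCoc C} (i : K ⟶ A) : Prop :=
  ∃ ψ : hCar A.obj ⊗ hCar K.obj ⟶ hCar K.obj,
    ψ ≫ uhom i = (hCar A.obj ◁ uhom i) ≫ hAd A.obj

/-- A monomorphism `i : K ⟶ A` in `Hopf_coc(M)` is right normal if there is
`ψ' : K ⊗ A ⟶ K` with `i ∘ ψ' = ad'_A ∘ (i ⊗ Id_A)`. -/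
def IsRightNormal {K A : HopfCoc C} (i : K ⟶ A) : Prop :=
  ∃ ψ' : hCar K.obj ⊗ hCar A.obj ⟶ hCar K.obj,
    ψ' ≫ uhom i = (uhom i ▷ hCar A.obj) ≫ hAd' A.obj

end Adjoint


section AuxProofs
variable [SymmetricCategory C]

private lemma structQ (X : C) :
    (α_ X X X).hom ≫ (X ◁ (β_ X X).hom) ≫ (α_ X X X).inv ≫ (β_ (X ⊗ X) X).hom ≫ (α_ X X X).inv
      = (β_ X X).hom ▷ X := by
  rw [BraidedCategory.braiding_tensor_left_hom]
  simp only [Category.assoc, Iso.inv_hom_id_assoc, Iso.hom_inv_id, Category.comp_id,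
    ← MonoidalCategory.whiskerLeft_comp_assoc, SymmetricCategory.symmetry,
    MonoidalCategory.whiskerLeft_id, Category.id_comp, Iso.hom_inv_id_assoc]

private lemma structL (X : C) :
    ((λ_ X).inv ▷ X) ≫ (α_ (𝟙_ C) X X).hom ≫ ((𝟙_ C) ◁ (β_ X X).hom) ≫ (α_ (𝟙_ C) X X).inv ≫
      ((λ_ X).hom ▷ X) = (β_ X X).hom := by
  simp [MonoidalCategory.id_whiskerLeft]

private lemma structT (X : C) :
    ((α_ X X X).inv ▷ X) ≫ (α_ (X ⊗ X) X X).hom ≫ ((X ⊗ X) ◁ (β_ X X).hom) ≫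
      (α_ (X ⊗ X) X X).inv ≫ ((α_ X X X).hom ▷ X) ≫ ((X ◁ (β_ X X).hom) ▷ X) ≫
      ((α_ X X X).inv ▷ X) ≫ (α_ (X ⊗ X) X X).hom
    = (α_ X (X ⊗ X) X).hom ≫ (X ◁ (β_ (X ⊗ X) X).hom) ≫ (α_ X X (X ⊗ X)).inv := by
  simp only [BraidedCategory.braiding_tensor_left_hom, MonoidalCategory.comp_whiskerRight,
    MonoidalCategory.whiskerLeft_comp, Category.assoc]
  monoidal

/-- The forward direction: if `H` is commutative then `ad_H = ε ▷ Id`. -/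
private lemma ad_eq_of_comm (H : Hopf C)
    (hcomm : (β_ (hCar H) (hCar H)).hom ≫ hMul H = hMul H) :
    hAd H = (hCounit H ▷ hCar H) ≫ (λ_ (hCar H)).hom := by
  unfold hAd adOf
  nth_rewrite 2 [← hcomm]
  slice_lhs 5 6 => rw [BraidedCategory.braiding_naturality]
  rw [tensorHom_def (hS H) (hMul H)]
  slice_lhs 5 6 => rw [← BraidedCategory.braiding_naturality_right]
  have massoc : (hCar H ◁ hMul H) ≫ hMul H =
      (α_ (hCar H) (hCar H) (hCar H)).inv ≫ (hMul H ▷ hCar H) ≫ hMul H := by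
    rw [MonObj.mul_assoc (hCar H), Iso.inv_hom_id_assoc]
  slice_lhs 7 8 => rw [massoc]
  slice_lhs 4 5 => rw [← associator_inv_naturality_right]
  slice_lhs 3 4 => rw [← MonoidalCategory.whiskerLeft_comp,
    ← BraidedCategory.braiding_naturality_left, MonoidalCategory.whiskerLeft_comp]
  slice_lhs 2 3 => rw [← associator_naturality_middle]
  slice_lhs 3 7 => rw [structQ]
  slice_lhs 3 4 => rw [← MonoidalCategory.comp_whiskerRight, hcomm]
  slice_lhs 1 3 => rw [← MonoidalCategory.comp_whiskerRight,
    ← MonoidalCategory.comp_whiskerRight, HopfObj.antipode_right (hCar H)]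
  rw [MonoidalCategory.comp_whiskerRight]
  slice_lhs 2 3 => rw [MonObj.one_mul (hCar H)]

/-- Coassociativity rearrangement. -/
private lemma comulP (H : Hopf C) :
    (hComul H ▷ hCar H) ≫ (α_ (hCar H) (hCar H) (hCar H)).hom ≫
      (hCar H ◁ (β_ (hCar H) (hCar H)).hom) ≫ (α_ (hCar H) (hCar H) (hCar H)).inv ≫
      ((hComul H ▷ hCar H) ▷ hCar H) ≫ ((α_ (hCar H) (hCar H) (hCar H)).hom ▷ hCar H) ≫
      ((hCar H ◁ (β_ (hCar H) (hCar H)).hom) ▷ hCar H) ≫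
      ((α_ (hCar H) (hCar H) (hCar H)).inv ▷ hCar H) ≫
      (α_ (hCar H ⊗ hCar H) (hCar H) (hCar H)).hom
    = (hComul H ▷ hCar H) ≫ (α_ (hCar H) (hCar H) (hCar H)).hom ≫
      (hCar H ◁ (β_ (hCar H) (hCar H)).hom) ≫ (α_ (hCar H) (hCar H) (hCar H)).inv ≫
      ((hCar H ⊗ hCar H) ◁ hComul H) := by
  slice_lhs 4 5 => rw [← associator_inv_naturality_left]
  slice_lhs 3 4 => rw [whisker_exchange]
  slice_lhs 2 3 => rw [← associator_naturality_left]
  slice_lhs 1 2 => rw [← MonoidalCategory.comp_whiskerRight,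
    ComonObj.comul_assoc_flip (hCar H), MonoidalCategory.comp_whiskerRight,
    MonoidalCategory.comp_whiskerRight]
  slice_lhs 3 10 => rw [structT]
  slice_rhs 4 5 => rw [← associator_inv_naturality_right]
  slice_rhs 3 4 => rw [← MonoidalCategory.whiskerLeft_comp,
    ← BraidedCategory.braiding_naturality_left, MonoidalCategory.whiskerLeft_comp]
  slice_rhs 2 3 => rw [← associator_naturality_middle]
  simp only [Category.assoc]

/-- The converse direction: if `ad_H = ε ▷ Id` then `H` is commutative. -/
private lemma comm_of_ad (H : Hopf C)
    (had : hAd H = (hCounit H ▷ hCar H) ≫ (λ_ (hCar H)).hom) :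
    (β_ (hCar H) (hCar H)).hom ≫ hMul H = hMul H := by
  have e1 : (hComul H ▷ hCar H) ≫ (α_ (hCar H) (hCar H) (hCar H)).hom ≫
      (hCar H ◁ (β_ (hCar H) (hCar H)).hom) ≫ (α_ (hCar H) (hCar H) (hCar H)).inv ≫
      (hAd H ▷ hCar H) ≫ hMul H = (β_ (hCar H) (hCar H)).hom ≫ hMul H := by
    rw [had, MonoidalCategory.comp_whiskerRight]
    slice_lhs 4 5 => rw [← associator_inv_naturality_left]
    slice_lhs 3 4 => rw [whisker_exchange]
    slice_lhs 2 3 => rw [← associator_naturality_left]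
    slice_lhs 1 2 => rw [← MonoidalCategory.comp_whiskerRight, ComonObj.counit_comul (hCar H)]
    slice_lhs 1 5 => rw [structL]
  have e2 : (hComul H ▷ hCar H) ≫ (α_ (hCar H) (hCar H) (hCar H)).hom ≫
      (hCar H ◁ (β_ (hCar H) (hCar H)).hom) ≫ (α_ (hCar H) (hCar H) (hCar H)).inv ≫
      (hAd H ▷ hCar H) ≫ hMul H = hMul H := by
    have adexp : hAd H = (hComul H ▷ hCar H) ≫ (α_ (hCar H) (hCar H) (hCar H)).hom ≫
        (hCar H ◁ (β_ (hCar H) (hCar H)).hom) ≫ (α_ (hCar H) (hCar H) (hCar H)).inv ≫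
        (hMul H ▷ hCar H) ≫ (hCar H ◁ hS H) ≫ hMul H := by
      unfold hAd adOf
      rw [tensorHom_def (hMul H) (hS H)]
      simp only [Category.assoc]
    rw [adexp]
    simp only [MonoidalCategory.comp_whiskerRight, Category.assoc]
    slice_lhs 11 12 => rw [MonObj.mul_assoc (hCar H)]
    slice_lhs 10 11 => rw [associator_naturality_middle]
    slice_lhs 9 10 => rw [associator_naturality_left]
    slice_lhs 11 12 => rw [← MonoidalCategory.whiskerLeft_comp]
    slice_lhs 10 11 => rw [← whisker_exchange]
    slice_lhs 1 9 => rw [comulP]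
    slice_lhs 5 6 => rw [← MonoidalCategory.whiskerLeft_comp, HopfObj.antipode_left (hCar H),
      MonoidalCategory.whiskerLeft_comp]
    slice_lhs 6 7 => rw [whisker_exchange]
    slice_lhs 7 8 => rw [MonObj.mul_one (hCar H)]
    slice_lhs 6 7 => rw [MonoidalCategory.rightUnitor_naturality]
    slice_lhs 4 5 => rw [← associator_inv_naturality_right]
    slice_lhs 3 4 => rw [← MonoidalCategory.whiskerLeft_comp,
      ← BraidedCategory.braiding_naturality_left, MonoidalCategory.whiskerLeft_comp]
    slice_lhs 2 3 => rw [← associator_naturality_middle]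
    slice_lhs 1 2 => rw [← MonoidalCategory.comp_whiskerRight, ComonObj.comul_counit (hCar H)]
    rw [braiding_tensorUnit_left]
    have hcoh : ((ρ_ (hCar H)).inv ▷ hCar H) ≫ (α_ (hCar H) (𝟙_ C) (hCar H)).hom ≫
        (hCar H ◁ ((λ_ (hCar H)).hom ≫ (ρ_ (hCar H)).inv)) ≫
        (α_ (hCar H) (hCar H) (𝟙_ C)).inv ≫ (ρ_ (hCar H ⊗ hCar H)).hom
        = 𝟙 (hCar H ⊗ hCar H) := by
      monoidal
    slice_lhs 1 5 => rw [hcoh]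
    rw [Category.id_comp]
  exact e1.symm.trans e2

end AuxProofs

/-- **Statement 19.** For a cocommutative Hopf monoid `A` in a symmetric monoidal category,
`A` is commutative iff `ad_A = ε_A ⊗ Id_A`; consequently, if `A` is commutative then every
monomorphism `i : K ⟶ A` in `Hopf_coc(M)` is normal. -/
theorem commutative_iff_ad_trivial
    [SymmetricCategory C] (A : HopfCoc C) :
    (((β_ (hCar A.obj) (hCar A.obj)).hom ≫ hMul A.obj = hMul A.obj) ↔
      hAd A.obj = (hCounit A.obj ▷ hCar A.obj) ≫ (λ_ (hCar A.obj)).hom) ∧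
    (((β_ (hCar A.obj) (hCar A.obj)).hom ≫ hMul A.obj = hMul A.obj) →
      ∀ (K : HopfCoc C) (i : K ⟶ A), Mono i → IsLeftNormal i) := by
  constructor
  · constructor
    · exact fun h => ad_eq_of_comm A.obj h
    · exact fun h => comm_of_ad A.obj h
  · intro hcomm K i _
    refine ⟨(hCounit A.obj ▷ hCar K.obj) ≫ (λ_ (hCar K.obj)).hom, ?_⟩
    rw [ad_eq_of_comm A.obj hcomm]
    rw [Category.assoc, ← MonoidalCategory.leftUnitor_naturality]
    slice_rhs 1 2 => rw [whisker_exchange]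
    simp only [Category.assoc]


end HopfSemiabelian
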